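/- Let j, s, d, t be positive integers with s > dt and let F be a field. Let A be a block totally nonsingular matrix consisting of an (s − dt) × dt array of invertible j × j blocks over F. Let G = [I | A] ∈ F^{j(s−dt) × js}, where I is the j(s−dt) × j(s−dt) identity matrix, let C ⊆ F^{js} be the row space of G, and define the labeling L : [js] → [s] that assigns label i to the i-th block of j consecutive coordinates (L(x) = ⌈x/j⌉). Then C is a linear code of dimension j(s − dt) and every nonzero codeword of C has labelweight at least dt + 1 with respect to L. -/

import Mathlib

open Classical in
/-- The labelweight of a vector `c` with respect to a labeling `L`: the number of
distinct labels appearing on the support of `c`. -/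
noncomputable def labelWeight {ι F : Type*} [Fintype ι] {s : ℕ} [Zero F]
    (L : ι → Fin s) (c : ι → F) : ℕ :=
  ((Finset.univ.filter fun i => c i ≠ 0).image L).card

/-- A block matrix (an r × u array of j × j blocks) is block totally nonsingular if
every square sub-array of blocks is nonsingular. -/
def IsBlockTotallyNonsingular {F : Type*} [Field F] {r u j : ℕ}
    (A : Matrix (Fin r × Fin j) (Fin u × Fin j) F) : Prop :=
  ∀ (k : ℕ), 1 ≤ k → ∀ (ρ : Fin k → Fin r) (σ : Fin k → Fin u),
    Function.Injective ρ → Function.Injective σ →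
      (Matrix.of fun p q : Fin k × Fin j => A (ρ p.1, p.2) (σ q.1, q.2)).det ≠ 0

/-- Let A be a block totally nonsingular (s − dt) × dt array of j × j
blocks over F, let G = [I | A], let C be the row space of G, and let L be the labeling
assigning label i to the i-th block of j consecutive coordinates.  Then C is a linear
code of dimension j(s − dt) and every nonzero codeword of C has labelweight at least
dt + 1 with respect to L. -/
theorem stmt_6 {F : Type*} [Field F] {j s d t : ℕ}
    (hj : 0 < j) (hs : 0 < s) (hd : 0 < d) (ht : 0 < t) (hst : d * t < s)
    (A : Matrix (Fin (s - d * t) × Fin j) (Fin (d * t) × Fin j) F)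
    (hA : IsBlockTotallyNonsingular A)
    (G : Matrix (Fin (s - d * t) × Fin j)
        ((Fin (s - d * t) × Fin j) ⊕ (Fin (d * t) × Fin j)) F)
    (hG : G = Matrix.fromCols 1 A)
    (C : Submodule F (((Fin (s - d * t) × Fin j) ⊕ (Fin (d * t) × Fin j)) → F))
    (hC : C = Submodule.span F (Set.range fun i => G i))
    (L : ((Fin (s - d * t) × Fin j) ⊕ (Fin (d * t) × Fin j)) → Fin s)
    (hLleft : ∀ p : Fin (s - d * t) × Fin j,
      L (Sum.inl p) = Fin.castLE (Nat.sub_le s (d * t)) p.1)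
    (hLright : ∀ p : Fin (d * t) × Fin j,
      L (Sum.inr p) = ⟨s - d * t + (p.1 : ℕ), by have := p.1.isLt; omega⟩) :
    Module.finrank F C = j * (s - d * t) ∧
      ∀ c ∈ C, c ≠ 0 → d * t + 1 ≤ labelWeight L c := by
  classical
  subst hG hC
  -- rows of G are linearly independent
  have hrows : LinearIndependent F (fun i : (Fin (s - d * t) × Fin j) => Matrix.fromCols (1 : Matrix (Fin (s - d * t) × Fin j) (Fin (s - d * t) × Fin j) F) A i) := by
    apply LinearIndependent.of_comp (LinearMap.funLeft F F Sum.inl)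
    have heq : ((LinearMap.funLeft F F Sum.inl) ∘ fun i : (Fin (s - d * t) × Fin j) => Matrix.fromCols (1 : Matrix (Fin (s - d * t) × Fin j) (Fin (s - d * t) × Fin j) F) A i)
        = ⇑(Pi.basisFun F (Fin (s - d * t) × Fin j)) := by
      funext i p
      simp [LinearMap.funLeft, Matrix.fromCols_apply_inl, Matrix.one_apply,
        Pi.single_apply, eq_comm]
    rw [heq]
    exact (Pi.basisFun F (Fin (s - d * t) × Fin j)).linearIndependent
  constructor
  · rw [finrank_span_eq_card hrows]
    simp [Nat.mul_comm]
  · intro c hc hc0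
    by_contra hlt
    push_neg at hlt
    have hlw : labelWeight L c ≤ d * t := by omega
    obtain ⟨x, hx⟩ := (Submodule.mem_span_range_iff_exists_fun F).mp hc
    -- evaluate c on left and right
    have hcl : ∀ p : (Fin (s - d * t) × Fin j), c (Sum.inl p) = x p := by
      intro p
      rw [← hx]
      simp only [Finset.sum_apply, Pi.smul_apply, Matrix.fromCols_apply_inl,
        smul_eq_mul, Matrix.one_apply, mul_ite, mul_one, mul_zero]
      simp
    set w : (Fin (d * t) × Fin j) → F := fun q => ∑ i : (Fin (s - d * t) × Fin j), x i * A i q with hw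
    have hcr : ∀ q : (Fin (d * t) × Fin j), c (Sum.inr q) = w q := by
      intro q
      rw [← hx]
      simp [Finset.sum_apply, Matrix.fromCols_apply_inr, w]
    -- x ≠ 0
    have hx0 : ∃ i, x i ≠ 0 := by
      by_contra h
      push_neg at h
      apply hc0
      rw [← hx]
      simp [funext h]
    set Bl : Finset (Fin (s - d * t)) :=
      (Finset.univ.filter fun i : (Fin (s - d * t) × Fin j) => x i ≠ 0).image Prod.fst with hBl
    set Br : Finset (Fin (d * t)) :=
      (Finset.univ.filter fun q : (Fin (d * t) × Fin j) => w q ≠ 0).image Prod.fst with hBr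
    have hmemBl : ∀ i : (Fin (s - d * t) × Fin j), x i ≠ 0 → i.1 ∈ Bl := by
      intro i hi
      exact Finset.mem_image.mpr ⟨i, Finset.mem_filter.mpr ⟨Finset.mem_univ _, hi⟩, rfl⟩
    have hmemBr : ∀ q : (Fin (d * t) × Fin j), w q ≠ 0 → q.1 ∈ Br := by
      intro q hq
      exact Finset.mem_image.mpr ⟨q, Finset.mem_filter.mpr ⟨Finset.mem_univ _, hq⟩, rfl⟩
    -- card bound : Bl.card + Br.card ≤ d * t
    set T : Finset (Fin s) := (Finset.univ.filter fun i => c i ≠ 0).image L with hT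
    have hTcard : T.card ≤ d * t := hlw
    set fL : Fin (s - d * t) → Fin s := Fin.castLE (Nat.sub_le s (d * t)) with hfL
    set fR : Fin (d * t) → Fin s :=
      fun q1 => ⟨s - d * t + (q1 : ℕ), by have := q1.isLt; omega⟩ with hfR
    have hfLinj : Function.Injective fL := Fin.castLE_injective _
    have hfRinj : Function.Injective fR := by
      intro a b hab
      have : (fR a : ℕ) = (fR b : ℕ) := by rw [hab]
      simp only [fR] at this
      exact Fin.ext (by omega)
    have hTl : Bl.image fL ⊆ T := by
      intro l hl
      obtain ⟨p1, hp1, rfl⟩ := Finset.mem_image.mp hl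
      obtain ⟨p, hp, rfl⟩ := Finset.mem_image.mp hp1
      have hpx : x p ≠ 0 := (Finset.mem_filter.mp hp).2
      refine Finset.mem_image.mpr ⟨Sum.inl p, ?_, ?_⟩
      · exact Finset.mem_filter.mpr ⟨Finset.mem_univ _, by rw [hcl p]; exact hpx⟩
      · rw [hLleft]
    have hTr : Br.image fR ⊆ T := by
      intro l hl
      obtain ⟨q1, hq1, rfl⟩ := Finset.mem_image.mp hl
      obtain ⟨q, hq, rfl⟩ := Finset.mem_image.mp hq1
      have hqx : w q ≠ 0 := (Finset.mem_filter.mp hq).2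
      refine Finset.mem_image.mpr ⟨Sum.inr q, ?_, ?_⟩
      · exact Finset.mem_filter.mpr ⟨Finset.mem_univ _, by rw [hcr q]; exact hqx⟩
      · rw [hLright]
    have hdisj : Disjoint (Bl.image fL) (Br.image fR) := by
      rw [Finset.disjoint_left]
      intro l hl hr
      obtain ⟨p1, _, rfl⟩ := Finset.mem_image.mp hl
      obtain ⟨q1, _, hq⟩ := Finset.mem_image.mp hr
      have h1 : (fL p1 : ℕ) < s - d * t := p1.isLt
      have h2 : (fR q1 : ℕ) = s - d * t + (q1 : ℕ) := rfl
      rw [hq] at h2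
      omega
    have hcards : Bl.card + Br.card ≤ d * t := by
      have h1 : (Bl.image fL ∪ Br.image fR).card ≤ T.card :=
        Finset.card_le_card (Finset.union_subset hTl hTr)
      rw [Finset.card_union_of_disjoint hdisj, Finset.card_image_of_injective _ hfLinj,
        Finset.card_image_of_injective _ hfRinj] at h1
      omega
    -- Bl nonempty
    obtain ⟨i0, hi0⟩ := hx0
    have hBlne : Bl.Nonempty := ⟨i0.1, hmemBl i0 hi0⟩
    set a := Bl.card with ha
    have ha1 : 1 ≤ a := Finset.card_pos.mpr hBlne
    -- choose Z ⊆ Brᶜ of card a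
    have hZex : a ≤ Brᶜ.card := by
      rw [Finset.card_compl, Fintype.card_fin]
      omega
    obtain ⟨Z, hZsub, hZcard⟩ := Finset.exists_subset_card_eq hZex
    set ρ0 := Bl.orderIsoOfFin ha.symm with hρ0
    set σ0 := Z.orderIsoOfFin hZcard with hσ0
    set ρ : Fin a → Fin (s - d * t) := fun i => (ρ0 i : Fin (s - d * t)) with hρ
    set σ : Fin a → Fin (d * t) := fun i => (σ0 i : Fin (d * t)) with hσ
    have hρinj : Function.Injective ρ := fun a b h =>
      ρ0.injective (Subtype.ext h)
    have hσinj : Function.Injective σ := fun a b h =>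
      σ0.injective (Subtype.ext h)
    set M : Matrix (Fin a × Fin j) (Fin a × Fin j) F :=
      Matrix.of fun p q : Fin a × Fin j => A (ρ p.1, p.2) (σ q.1, q.2) with hM
    have hdet : M.det ≠ 0 := hA a ha1 ρ σ hρinj hσinj
    set y : Fin a × Fin j → F := fun p => x (ρ p.1, p.2) with hy
    -- y ᵥ* M = 0
    set e : Fin a × Fin j → (Fin (s - d * t) × Fin j) := fun p => (ρ p.1, p.2) with he
    have heinj : Function.Injective e := by
      intro p q hpq
      simp only [e, Prod.mk.injEq] at hpq
      exact Prod.ext (hρinj hpq.1) hpq.2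
    have himage : ∀ i : (Fin (s - d * t) × Fin j), i.1 ∈ Bl → i ∈ Finset.univ.image e := by
      intro i hi
      obtain ⟨p1, hp1⟩ := ρ0.surjective ⟨i.1, hi⟩
      refine Finset.mem_image.mpr ⟨(p1, i.2), Finset.mem_univ _, ?_⟩
      simp only [e]
      have : ρ p1 = i.1 := congrArg Subtype.val hp1
      rw [this]
    have hyM : Matrix.vecMul y M = 0 := by
      funext q
      simp only [Matrix.vecMul, dotProduct, Pi.zero_apply]
      show ∑ p : Fin a × Fin j, y p * M p q = 0
      have hsum : ∑ p : Fin a × Fin j, y p * M p q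
          = ∑ i ∈ Finset.univ.image e, x i * A i (σ q.1, q.2) := by
        rw [Finset.sum_image (fun p _ q _ h => heinj h)]
        rfl
      rw [hsum]
      have hfull : ∑ i ∈ Finset.univ.image e, x i * A i (σ q.1, q.2)
          = ∑ i : (Fin (s - d * t) × Fin j), x i * A i (σ q.1, q.2) := by
        apply Finset.sum_subset (Finset.subset_univ _)
        intro i _ hni
        have : x i = 0 := by
          by_contra hxi
          exact hni (himage i (hmemBl i hxi))
        rw [this, zero_mul]
      rw [hfull]
      have hz : w (σ q.1, q.2) = 0 := by
        by_contra hwz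
        have h1 : σ q.1 ∈ Br := hmemBr _ hwz
        have h2 : σ q.1 ∈ Brᶜ := hZsub (σ0 q.1).2
        exact (Finset.mem_compl.mp h2) h1
      exact hz
    -- contradiction: M invertible
    have hMu : IsUnit M.det := isUnit_iff_ne_zero.mpr hdet
    have hy0 : y = 0 := by
      have h1 : Matrix.vecMul y (M * M⁻¹) = Matrix.vecMul 0 M⁻¹ := by
        rw [← Matrix.vecMul_vecMul, hyM]
      rw [Matrix.mul_nonsing_inv _ hMu, Matrix.vecMul_one, Matrix.zero_vecMul] at h1
      exact h1
    obtain ⟨p1, hp1⟩ := ρ0.surjective ⟨i0.1, hmemBl i0 hi0⟩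
    have hρp1 : ρ p1 = i0.1 := congrArg Subtype.val hp1
    have : y (p1, i0.2) ≠ 0 := by
      simp only [y, hρp1]
      exact hi0
    rw [hy0] at this
    exact this rfl
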